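/- For 1 ≤ k ≤ 6, the zero set of the left octonion-monogenic function f(z) = Z₁(z)² + ⋯ + Z_k(z)² is exactly the (7−k)-dimensional linear subspace spanned by e_{k+1}, …, e₇; that is, f(z) = 0 if and only if x₀ = x₁ = ⋯ = x_k = 0. -/

import Mathlib

noncomputable section

/-- Octonions as the Cayley–Dickson double of the quaternions. -/
abbrev O := Quaternion ℝ × Quaternion ℝ

/-- Cayley–Dickson multiplication. -/
def omul (x y : O) : O := (x.1 * y.1 - y.2 * star x.2, star x.1 * y.2 + y.1 * x.2)

/-- Octonionic conjugation. -/
def oconj (x : O) : O := (star x.1, -x.2)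

/-- The unit 1 = (1,0). -/
def oone : O := (1, 0)

/-- Euclidean norm. -/
def onorm (x : O) : ℝ := Real.sqrt (‖x.1‖^2 + ‖x.2‖^2)

def qi : Quaternion ℝ := ⟨0,1,0,0⟩
def qj : Quaternion ℝ := ⟨0,0,1,0⟩

/-- The standard octonion basis 1, e₁, …, e₇ with e₁ = (i,0), e₂ = (j,0), e₃ = (0,1),
    e₄ = e₁e₂, e₅ = e₁e₃, e₆ = e₂e₃, e₇ = (e₁e₂)e₃. -/
def basis8 : Fin 8 → O := ![oone, (qi,0), (qj,0), ((0:Quaternion ℝ),1),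
  omul (qi,0) (qj,0), omul (qi,0) (0,1), omul (qj,0) (0,1), omul (omul (qi,0) (qj,0)) (0,1)]

/-- The real coordinates x₀,…,x₇ of z = x₀ + Σ xᵢeᵢ with respect to `basis8`. -/
def coord : Fin 8 → O → ℝ :=
  ![fun z => z.1.re, fun z => z.1.imI, fun z => z.1.imJ, fun z => z.2.re,
    fun z => z.1.imK, fun z => -z.2.imI, fun z => -z.2.imJ, fun z => -z.2.imK]

/-- Left octonionic Cauchy–Riemann operator D f = ∂f/∂x₀ + Σᵢ eᵢ·(∂f/∂xᵢ). -/
def Dleft (f : O → O) (z : O) : O :=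
  fderiv ℝ f z (basis8 0) + ∑ i : Fin 7, omul (basis8 i.succ) (fderiv ℝ f z (basis8 i.succ))

/-- Right octonionic Cauchy–Riemann operator f D = ∂f/∂x₀ + Σᵢ (∂f/∂xᵢ)·eᵢ. -/
def Dright (f : O → O) (z : O) : O :=
  fderiv ℝ f z (basis8 0) + ∑ i : Fin 7, omul (fderiv ℝ f z (basis8 i.succ)) (basis8 i.succ)

/-- Fueter polynomials Zᵢ(z) = xᵢ − x₀eᵢ. -/
def Zp (i : Fin 8) (z : O) : O := coord i z • oone - coord 0 z • basis8 i
/-- The truncated sum of squares of Fueter polynomials Z₁² + ⋯ + Z_k². -/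
def fk (k : ℕ) (z : O) : O :=
  ∑ i : Fin 7, if (i : ℕ) + 1 ≤ k then omul (Zp i.succ z) (Zp i.succ z) else 0

lemma omul_add_left (x y z : O) : omul (x+y) z = omul x z + omul y z := by
  simp only [omul, Prod.fst_add, Prod.snd_add, star_add, add_mul, mul_add, Prod.mk_add_mk,
    Prod.mk.injEq]; constructor <;> abel
lemma omul_add_right (x y z : O) : omul x (y+z) = omul x y + omul x z := by
  simp only [omul, Prod.fst_add, Prod.snd_add, star_add, add_mul, mul_add, Prod.mk_add_mk,
    Prod.mk.injEq]; constructor <;> abel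
lemma omul_smul_left (c : ℝ) (x z : O) : omul (c • x) z = c • omul x z := by
  simp [omul, Prod.ext_iff, star_smul, mul_smul_comm, smul_mul_assoc, smul_sub, smul_add]
lemma omul_smul_right (c : ℝ) (x z : O) : omul x (c • z) = c • omul x z := by
  simp [omul, Prod.ext_iff, star_smul, mul_smul_comm, smul_mul_assoc, smul_sub, smul_add]
lemma omul_one (x : O) : omul x oone = x := by simp [omul, oone]
lemma one_omul (x : O) : omul oone x = x := by simp [omul, oone]
lemma omul_sub_left (x y z : O) : omul (x-y) z = omul x z - omul y z := by
  have := omul_add_left (x-y) y z; rw [sub_add_cancel] at this; rw [this]; abel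
lemma omul_sub_right (x y z : O) : omul x (y-z) = omul x y - omul x z := by
  have := omul_add_right x (y-z) z; rw [sub_add_cancel] at this; rw [this]; abel

def qk : Quaternion ℝ := ⟨0,0,0,1⟩

lemma basis8_eq : basis8 = ![((1:Quaternion ℝ),0), (qi,0), (qj,0), (0,1),
    (qk,0), (0,-qi), (0,-qj), (0,-qk)] := by
  have h1 : qi * qj = qk := by
    ext <;> simp only [Quaternion.re_mul, Quaternion.imI_mul, Quaternion.imJ_mul, Quaternion.imK_mul] <;> simp [qi, qj, qk]
  have h2 : star qi = -qi := by
    ext <;> simp only [Quaternion.re_star, Quaternion.imI_star, Quaternion.imJ_star, Quaternion.imK_star, Quaternion.re_neg, Quaternion.imI_neg, Quaternion.imJ_neg, Quaternion.imK_neg] <;> simp [qi]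
  have h3 : star qj = -qj := by
    ext <;> simp only [Quaternion.re_star, Quaternion.imI_star, Quaternion.imJ_star, Quaternion.imK_star, Quaternion.re_neg, Quaternion.imI_neg, Quaternion.imJ_neg, Quaternion.imK_neg] <;> simp [qj]
  have h4 : star qj * star qi = -qk := by
    ext <;> simp only [Quaternion.re_mul, Quaternion.imI_mul, Quaternion.imJ_mul, Quaternion.imK_mul, Quaternion.re_star, Quaternion.imI_star, Quaternion.imJ_star, Quaternion.imK_star, Quaternion.re_neg, Quaternion.imI_neg, Quaternion.imJ_neg, Quaternion.imK_neg] <;> simp [qi, qj, qk]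
  have h5 : star qk = -qk := by
    ext <;> simp only [Quaternion.re_star, Quaternion.imI_star, Quaternion.imJ_star, Quaternion.imK_star, Quaternion.re_neg, Quaternion.imI_neg, Quaternion.imJ_neg, Quaternion.imK_neg] <;> simp [qk]
  funext i
  fin_cases i <;>
    simp [basis8, Matrix.cons_val_succ', Matrix.cons_val_zero, omul, oone, h1, h2, h3, h4, h5]

open Quaternion in
lemma coord_basis (i j : Fin 8) : coord i (basis8 j) = if i = j then 1 else 0 := by
  fin_cases i <;> fin_cases j <;>
    norm_num [coord, basis8_eq, Matrix.cons_val_succ', Matrix.cons_val_zero, Fin.ext_iff,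
      Quaternion.ext_iff] <;> simp [qi, qj, qk]


lemma coord_add (i : Fin 8) (z w : O) : coord i (z+w) = coord i z + coord i w := by
  fin_cases i <;>
    simp only [coord, Matrix.cons_val_succ', Matrix.cons_val_zero] <;> simp <;> ring
lemma coord_smul (i : Fin 8) (c : ℝ) (z : O) : coord i (c • z) = c * coord i z := by
  fin_cases i <;>
    simp only [coord, Matrix.cons_val_succ', Matrix.cons_val_zero] <;>
    simp [Quaternion.re_smul, Quaternion.imI_smul, Quaternion.imJ_smul, Quaternion.imK_smul,
      smul_eq_mul]

/-- coord as a linear map. -/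
def coordL (i : Fin 8) : O →ₗ[ℝ] ℝ where
  toFun := coord i
  map_add' := coord_add i
  map_smul' := coord_smul i

lemma Zp_add (i : Fin 8) (z w : O) : Zp i (z+w) = Zp i z + Zp i w := by
  simp only [Zp, coord_add, add_smul]; abel
lemma Zp_smul (i : Fin 8) (c : ℝ) (z : O) : Zp i (c • z) = c • Zp i z := by
  simp only [Zp, coord_smul, mul_smul, smul_sub]

def ZpL (i : Fin 8) : O →L[ℝ] O :=
  LinearMap.toContinuousLinearMap
    { toFun := Zp i, map_add' := Zp_add i, map_smul' := Zp_smul i }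

@[simp] lemma ZpL_apply (i : Fin 8) (z : O) : ZpL i z = Zp i z := rfl

lemma isBBM_omul : IsBoundedBilinearMap ℝ (fun p : O × O => omul p.1 p.2) where
  add_left x y z := omul_add_left x y z
  smul_left c x z := omul_smul_left c x z
  add_right x y z := omul_add_right x y z
  smul_right c x z := omul_smul_right c x z
  bound := by
    refine ⟨2, by norm_num, fun x y => ?_⟩
    have hx1 : ‖x.1‖ ≤ ‖x‖ := norm_fst_le x
    have hx2 : ‖x.2‖ ≤ ‖x‖ := norm_snd_le x
    have hy1 : ‖y.1‖ ≤ ‖y‖ := norm_fst_le y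
    have hy2 : ‖y.2‖ ≤ ‖y‖ := norm_snd_le y
    have hx : (0:ℝ) ≤ ‖x‖ := norm_nonneg x
    have hy : (0:ℝ) ≤ ‖y‖ := norm_nonneg y
    have h1 : ‖x.1 * y.1 - y.2 * star x.2‖ ≤ 2 * ‖x‖ * ‖y‖ := by
      calc ‖x.1 * y.1 - y.2 * star x.2‖ ≤ ‖x.1 * y.1‖ + ‖y.2 * star x.2‖ := norm_sub_le _ _
        _ ≤ ‖x.1‖*‖y.1‖ + ‖y.2‖*‖star x.2‖ :=
            add_le_add (norm_mul_le _ _) (norm_mul_le _ _)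
        _ = ‖x.1‖*‖y.1‖ + ‖y.2‖*‖x.2‖ := by rw [norm_star]
        _ ≤ ‖x‖*‖y‖ + ‖y‖*‖x‖ :=
            add_le_add (mul_le_mul hx1 hy1 (norm_nonneg _) hx)
              (mul_le_mul hy2 hx2 (norm_nonneg _) hy)
        _ = 2 * ‖x‖ * ‖y‖ := by ring
    have h2 : ‖star x.1 * y.2 + y.1 * x.2‖ ≤ 2 * ‖x‖ * ‖y‖ := by
      calc ‖star x.1 * y.2 + y.1 * x.2‖ ≤ ‖star x.1 * y.2‖ + ‖y.1 * x.2‖ := norm_add_le _ _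
        _ ≤ ‖star x.1‖*‖y.2‖ + ‖y.1‖*‖x.2‖ :=
            add_le_add (norm_mul_le _ _) (norm_mul_le _ _)
        _ = ‖x.1‖*‖y.2‖ + ‖y.1‖*‖x.2‖ := by rw [norm_star]
        _ ≤ ‖x‖*‖y‖ + ‖y‖*‖x‖ :=
            add_le_add (mul_le_mul hx1 hy2 (norm_nonneg _) hx)
              (mul_le_mul hy1 hx2 (norm_nonneg _) hy)
        _ = 2 * ‖x‖ * ‖y‖ := by ring
    calc ‖omul x y‖ = max ‖(omul x y).1‖ ‖(omul x y).2‖ := rfl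
      _ ≤ 2 * ‖x‖ * ‖y‖ := max_le h1 h2

/-- derivative CLM of the i-th square at z -/
def sqD (i : Fin 8) (z : O) : O →L[ℝ] O :=
  (isBBM_omul.deriv (Zp i z, Zp i z)).comp ((ZpL i).prod (ZpL i))

lemma sqD_apply (i : Fin 8) (z v : O) :
    sqD i z v = omul (Zp i v) (Zp i z) + omul (Zp i z) (Zp i v) := by
  simp only [sqD, ContinuousLinearMap.comp_apply, ContinuousLinearMap.prod_apply, ZpL_apply]
  rw [isBBM_omul.deriv_apply]
  simp only []
  abel

lemma hasFDerivAt_sq (i : Fin 8) (z : O) :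
    HasFDerivAt (fun z => omul (Zp i z) (Zp i z)) (sqD i z) z := by
  have h1 : HasFDerivAt (fun z => ((ZpL i) z, (ZpL i) z)) ((ZpL i).prod (ZpL i)) z :=
    ((ZpL i).prod (ZpL i)).hasFDerivAt
  have := (isBBM_omul.hasFDerivAt ((ZpL i) z, (ZpL i) z)).comp z h1
  exact this

def fkD (k : ℕ) (z : O) : O →L[ℝ] O :=
  ∑ i : Fin 7, if (i : ℕ) + 1 ≤ k then sqD i.succ z else 0

lemma hasFDerivAt_fk (k : ℕ) (z : O) : HasFDerivAt (fk k) (fkD k z) z := by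
  have : HasFDerivAt (fun z => ∑ i : Fin 7,
      (if (i : ℕ) + 1 ≤ k then omul (Zp i.succ z) (Zp i.succ z) else 0))
      (∑ i : Fin 7, if (i : ℕ) + 1 ≤ k then sqD i.succ z else 0) z := by
    apply HasFDerivAt.fun_sum
    intro i _
    by_cases h : (i : ℕ) + 1 ≤ k
    · simpa [h] using hasFDerivAt_sq i.succ z
    · simpa [h] using hasFDerivAt_const (0 : O) z
  exact this

lemma fderiv_fk (k : ℕ) (z v : O) :
    fderiv ℝ (fk k) z v = ∑ i : Fin 7, if (i : ℕ) + 1 ≤ k then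
      omul (Zp i.succ v) (Zp i.succ z) + omul (Zp i.succ z) (Zp i.succ v) else 0 := by
  rw [(hasFDerivAt_fk k z).fderiv]
  simp only [fkD, ContinuousLinearMap.sum_apply]
  refine Finset.sum_congr rfl fun i _ => ?_
  by_cases h : (i : ℕ) + 1 ≤ k <;> simp [h, sqD_apply]

lemma omul_zero_left (y : O) : omul 0 y = 0 := by simp [omul]
lemma omul_zero_right (x : O) : omul x 0 = 0 := by simp [omul]
lemma omul_neg_left (x y : O) : omul (-x) y = -omul x y := by
  simp only [omul, Prod.fst_neg, Prod.snd_neg, star_neg, neg_mul, mul_neg, Prod.neg_mk,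
    Prod.mk.injEq]
  constructor <;> abel
lemma omul_neg_right (x y : O) : omul x (-y) = -omul x y := by
  simp only [omul, Prod.fst_neg, Prod.snd_neg, star_neg, neg_mul, mul_neg, Prod.neg_mk,
    Prod.mk.injEq]
  constructor <;> abel

lemma Zp_basis0 (j : Fin 7) : Zp j.succ (basis8 0) = -basis8 j.succ := by
  have h1 : coord j.succ (basis8 0) = 0 := by
    rw [coord_basis]; simp
  have h2 : coord 0 (basis8 0) = 1 := by rw [coord_basis]; simp
  simp [Zp, h1, h2]

lemma Zp_basis_succ (i j : Fin 7) :
    Zp i.succ (basis8 j.succ) = if i = j then oone else 0 := by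
  have h2 : coord 0 (basis8 j.succ) = 0 := by
    rw [coord_basis]; simp [(Fin.succ_ne_zero j).symm]
  have h1 : coord i.succ (basis8 j.succ) = if i = j then 1 else 0 := by
    rw [coord_basis]; simp only [Fin.succ_inj]
  rw [Zp, h1, h2]
  by_cases h : i = j <;> simp [h]

lemma omul_basis_Zp_comm (j : Fin 8) (z : O) :
    omul (basis8 j) (Zp j z) = omul (Zp j z) (basis8 j) := by
  rw [Zp, omul_sub_right, omul_sub_left, omul_smul_right, omul_smul_left,
    omul_smul_right, omul_smul_left, omul_one, one_omul]

lemma Dleft_fk (k : ℕ) (z : O) : Dleft (fk k) z = 0 := by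
  unfold Dleft
  have e0 : fderiv ℝ (fk k) z (basis8 0) =
      ∑ i : Fin 7, (if (i:ℕ)+1 ≤ k then
        -omul (basis8 i.succ) (Zp i.succ z) - omul (Zp i.succ z) (basis8 i.succ) else 0) := by
    rw [fderiv_fk]
    refine Finset.sum_congr rfl fun i _ => ?_
    by_cases h : (i:ℕ)+1 ≤ k
    · simp only [h, if_true, Zp_basis0, omul_neg_left, omul_neg_right]; abel
    · simp [h]
  have ej : ∀ j : Fin 7, fderiv ℝ (fk k) z (basis8 j.succ) =
      (if (j:ℕ)+1 ≤ k then Zp j.succ z + Zp j.succ z else 0) := by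
    intro j
    rw [fderiv_fk]
    rw [Finset.sum_eq_single j]
    · by_cases h : (j:ℕ)+1 ≤ k <;>
        simp [h, Zp_basis_succ, omul_one, one_omul]
    · intro i _ hij
      by_cases h : (i:ℕ)+1 ≤ k <;>
        simp [h, Zp_basis_succ, hij, omul_zero_left, omul_zero_right]
    · simp
  rw [e0]
  have hsum : ∑ j : Fin 7, omul (basis8 j.succ) (fderiv ℝ (fk k) z (basis8 j.succ)) =
      ∑ j : Fin 7, (if (j:ℕ)+1 ≤ k then
        omul (basis8 j.succ) (Zp j.succ z) + omul (basis8 j.succ) (Zp j.succ z) else 0) := by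
    refine Finset.sum_congr rfl fun j _ => ?_
    rw [ej j]
    by_cases h : (j:ℕ)+1 ≤ k <;>
      simp [h, omul_add_right, omul_zero_right]
  rw [hsum, ← Finset.sum_add_distrib]
  apply Finset.sum_eq_zero
  intro i _
  by_cases h : (i:ℕ)+1 ≤ k
  · simp only [h, if_true]
    rw [omul_basis_Zp_comm]
    abel
  · simp [h]

open Quaternion in
lemma basis_sq (i : Fin 7) : omul (basis8 i.succ) (basis8 i.succ) = -oone := by
  fin_cases i <;>
    simp only [basis8_eq, Matrix.cons_val_succ', Matrix.cons_val_zero, Fin.succ] <;>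
    simp [omul, oone, Quaternion.ext_iff, Quaternion.re_mul, Quaternion.imI_mul, Quaternion.imJ_mul, Quaternion.imK_mul, Prod.ext_iff] <;> simp [qi, qj, qk]

lemma Zp_sq (i : Fin 7) (z : O) :
    omul (Zp i.succ z) (Zp i.succ z) =
      (coord i.succ z ^ 2 - coord 0 z ^ 2) • oone -
        (2 * coord 0 z * coord i.succ z) • basis8 i.succ := by
  simp only [Zp, omul_sub_left, omul_sub_right, omul_smul_left, omul_smul_right,
    omul_one, one_omul, basis_sq]
  match_scalars <;> ring

lemma coord_sub (j : Fin 8) (x y : O) : coord j (x - y) = coord j x - coord j y := by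
  have := map_sub (coordL j) x y
  exact this

lemma coord_sum (j : Fin 8) {s : Finset (Fin 7)} (f : Fin 7 → O) :
    coord j (∑ i ∈ s, f i) = ∑ i ∈ s, coord j (f i) := by
  exact map_sum (coordL j) f s

lemma coord_oone (j : Fin 8) : coord j oone = if j = 0 then 1 else 0 := by
  have := coord_basis j 0
  simpa [basis8] using this

open Quaternion in
lemma coord0_fk (k : ℕ) (z : O) :
    coord 0 (fk k z) =
      ∑ i : Fin 7, (if (i:ℕ)+1 ≤ k then coord i.succ z ^ 2 - coord 0 z ^ 2 else 0) := by
  rw [fk, coord_sum]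
  refine Finset.sum_congr rfl fun i _ => ?_
  by_cases h : (i:ℕ)+1 ≤ k
  · simp only [h, if_true, Zp_sq, coord_sub, coord_smul, coord_oone, coord_basis]
    have : ¬ ((0 : Fin 8) = i.succ) := (Fin.succ_ne_zero i).symm
    simp [this]
  · simp [h, coordL, coord]

open Quaternion in
lemma coordsucc_fk (k : ℕ) (j : Fin 7) (z : O) :
    coord j.succ (fk k z) =
      if (j:ℕ)+1 ≤ k then -(2 * coord 0 z * coord j.succ z) else 0 := by
  rw [fk, coord_sum, Finset.sum_eq_single j]
  · by_cases h : (j:ℕ)+1 ≤ k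
    · simp only [h, if_true, Zp_sq, coord_sub, coord_smul, coord_oone, coord_basis]
      have : ¬ ((j.succ : Fin 8) = 0) := Fin.succ_ne_zero j
      simp [this]
    · simp only [h, if_false]; exact map_zero (coordL j.succ)
  · intro i _ hij
    by_cases h : (i:ℕ)+1 ≤ k
    · simp only [h, if_true, Zp_sq, coord_sub, coord_smul, coord_oone, coord_basis]
      have h1 : ¬ ((j.succ : Fin 8) = 0) := Fin.succ_ne_zero j
      have h2 : ¬ ((j.succ : Fin 8) = i.succ) := by
        simp [Fin.succ_inj]; exact fun hh => hij (hh.symm)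
      simp [h1, h2]
    · rw [if_neg h]; exact map_zero (coordL j.succ)
  · simp

open Quaternion in
lemma coord_zero_iff (x : O) : x = 0 ↔ ∀ j : Fin 8, coord j x = 0 := by
  constructor
  · rintro rfl j
    fin_cases j <;> simp only [coord, Matrix.cons_val_succ', Matrix.cons_val_zero] <;> simp
  · intro h
    have h0 := h ⟨0, by norm_num⟩
    have h1 := h ⟨1, by norm_num⟩
    have h2 := h ⟨2, by norm_num⟩
    have h3 := h ⟨3, by norm_num⟩
    have h4 := h ⟨4, by norm_num⟩
    have h5 := h ⟨5, by norm_num⟩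
    have h6 := h ⟨6, by norm_num⟩
    have h7 := h ⟨7, by norm_num⟩
    simp only [coord, Matrix.cons_val_succ', Matrix.cons_val_zero, neg_eq_zero] at h0 h1 h2 h3 h4 h5 h6 h7
    have : x.1 = 0 ∧ x.2 = 0 := by
      constructor <;> ext <;> simp_all [Quaternion.ext_iff]
    exact Prod.ext this.1 this.2


/-- For 1 ≤ k ≤ 6 the function Z₁² + ⋯ + Z_k² is left monogenic and its zero set is
    exactly the subspace where x₀ = x₁ = ⋯ = x_k = 0, i.e. the span of e_{k+1},…,e₇. -/
theorem zero_set_sum_squares :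
    ∀ k : ℕ, 1 ≤ k → k ≤ 6 →
      (∀ z : O, Dleft (fk k) z = 0) ∧
      (∀ z : O, fk k z = 0 ↔
        (coord 0 z = 0 ∧ ∀ i : Fin 7, (i : ℕ) + 1 ≤ k → coord i.succ z = 0)) := by
  intro k hk1 _
  refine ⟨Dleft_fk k, fun z => ?_⟩
  constructor
  · intro hz
    have hco : ∀ j : Fin 8, coord j (fk k z) = 0 := (coord_zero_iff _).1 hz
    have h0 := hco 0
    rw [coord0_fk] at h0
    have hsucc : ∀ j : Fin 7, (j:ℕ)+1 ≤ k → coord 0 z * coord j.succ z = 0 := by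
      intro j hj
      have h := hco j.succ
      rw [coordsucc_fk, if_pos hj] at h
      linarith [h]
    set a := coord 0 z with ha
    set S := Finset.univ.filter (fun i : Fin 7 => (i:ℕ)+1 ≤ k) with hS
    have h0' : ∑ i ∈ S, (coord i.succ z ^ 2 - a^2) = 0 := by
      rw [hS, Finset.sum_filter]; exact h0
    have hA : ∑ i ∈ S, coord i.succ z ^ 2 = (S.card : ℝ) * a^2 := by
      rw [Finset.sum_sub_distrib, Finset.sum_const, nsmul_eq_mul] at h0'
      linarith [h0']
    have hB : ∑ i ∈ S, (a * coord i.succ z)^2 = 0 := by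
      apply Finset.sum_eq_zero
      intro i hi
      rw [hS, Finset.mem_filter] at hi
      rw [hsucc i hi.2]; ring
    have hB' : a^2 * ((S.card : ℝ) * a^2) = 0 := by
      rw [← hA, Finset.mul_sum, ← hB]
      exact Finset.sum_congr rfl fun i _ => by ring
    have hcard : 0 < S.card := by
      apply Finset.card_pos.2
      exact ⟨0, by simp [hS, Finset.mem_filter]; omega⟩
    have ha0 : a = 0 := by
      by_contra hne
      have : (S.card : ℝ) > 0 := by exact_mod_cast hcard
      have h2 : a^2 > 0 := by positivity
      nlinarith [hB', mul_pos h2 (mul_pos this h2)]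
    refine ⟨ha0, fun i hi => ?_⟩
    have hsum0 : ∑ i ∈ S, coord i.succ z ^ 2 = 0 := by
      rw [hA, ha0]; ring
    have := (Finset.sum_eq_zero_iff_of_nonneg
      (fun i _ => sq_nonneg (coord i.succ z))).1 hsum0 i
      (by rw [hS, Finset.mem_filter]; exact ⟨Finset.mem_univ i, hi⟩)
    exact pow_eq_zero_iff (by norm_num) |>.1 this
  · rintro ⟨h0, hs⟩
    rw [fk]
    apply Finset.sum_eq_zero
    intro i _
    by_cases h : (i:ℕ)+1 ≤ k
    · rw [if_pos h, Zp_sq, h0, hs i h]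
      norm_num
    · rw [if_neg h]
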